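/- arXiv:1706.01813 — 3 statements merged into one kernel-verified Lean document; each statement's English description precedes it below -/
import Mathlib

section
/- Let k > 0, μ̄ > 0, r > 0, and let V₀ := μ̄/r - μ̄/(r+k) ≥ 0 (the value at the point (0,0)). Define g(μ) = e^{-r τ_0(μ)} V₀ - x_b(μ) for μ < 0, where τ_0(μ) = ln(μ̄/(μ̄-μ))/(-k) and x_b(μ) = (μ̄/k) ln((μ̄-μ)/μ̄) - μ/k. Then g is continuous and strictly increasing on (-∞,0), g(μ) → -∞ as μ → -∞, and g(μ) → V₀ ≥ 0 as μ → 0⁻. Hence if V₀ > 0 there exists a unique μ* < 0 with g(μ*) = 0. -/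
open Filter

private lemma gdet_contAt (k μbar r : ℝ) (hk : k ≠ 0) {μ : ℝ} (h : μbar - μ ≠ 0)
    (hμbar : μbar ≠ 0) :
    ContinuousAt (fun μ : ℝ => Real.exp (-r * (Real.log (μbar / (μbar - μ)) / (-k))) *
          (μbar / r - μbar / (r + k)) -
        ((μbar / k) * Real.log ((μbar - μ) / μbar) - μ / k)) μ := by
  have hsub : ContinuousAt (fun μ : ℝ => μbar - μ) μ :=
    (continuous_const.sub continuous_id).continuousAt
  apply ContinuousAt.sub
  · apply ContinuousAt.mul _ continuousAt_const
    apply Real.continuous_exp.continuousAt.comp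
    apply ContinuousAt.mul continuousAt_const
    apply ContinuousAt.div _ continuousAt_const (neg_ne_zero.mpr hk)
    exact (continuousAt_const.div hsub h).log (div_ne_zero hμbar h)
  · apply ContinuousAt.sub
    · exact continuousAt_const.mul ((hsub.div continuousAt_const hμbar).log
        (div_ne_zero h hμbar))
    · exact (continuous_id.div_const k).continuousAt

private lemma gdet_rw (k r : ℝ) (x : ℝ) : -r * (x / -k) = r / k * x := by
  rw [div_neg]; ring

/-- Properties of g(μ) = e^{-rτ₀(μ)} V₀ - x_b(μ) on (-∞,0) and existence of a
unique liquidation threshold μ* < 0 with g(μ*) = 0 when V₀ > 0. -/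
theorem liquidation_threshold_deterministic (k μbar r : ℝ)
    (hk : 0 < k) (hμbar : 0 < μbar) (hr : 0 < r) :
    0 ≤ μbar / r - μbar / (r + k) ∧
    ContinuousOn
      (fun μ : ℝ => Real.exp (-r * (Real.log (μbar / (μbar - μ)) / (-k))) *
          (μbar / r - μbar / (r + k)) -
        ((μbar / k) * Real.log ((μbar - μ) / μbar) - μ / k)) (Set.Iio 0) ∧
    StrictMonoOn
      (fun μ : ℝ => Real.exp (-r * (Real.log (μbar / (μbar - μ)) / (-k))) *
          (μbar / r - μbar / (r + k)) -
        ((μbar / k) * Real.log ((μbar - μ) / μbar) - μ / k)) (Set.Iio 0) ∧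
    Tendsto
      (fun μ : ℝ => Real.exp (-r * (Real.log (μbar / (μbar - μ)) / (-k))) *
          (μbar / r - μbar / (r + k)) -
        ((μbar / k) * Real.log ((μbar - μ) / μbar) - μ / k)) atBot atBot ∧
    Tendsto
      (fun μ : ℝ => Real.exp (-r * (Real.log (μbar / (μbar - μ)) / (-k))) *
          (μbar / r - μbar / (r + k)) -
        ((μbar / k) * Real.log ((μbar - μ) / μbar) - μ / k))
      (nhdsWithin 0 (Set.Iio 0)) (nhds (μbar / r - μbar / (r + k))) ∧
    (0 < μbar / r - μbar / (r + k) →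
      ∃! μstar : ℝ, μstar < 0 ∧
        Real.exp (-r * (Real.log (μbar / (μbar - μstar)) / (-k))) *
            (μbar / r - μbar / (r + k)) -
          ((μbar / k) * Real.log ((μbar - μstar) / μbar) - μstar / k) = 0) := by
  set V : ℝ := μbar / r - μbar / (r + k) with hV
  set g : ℝ → ℝ := fun μ : ℝ => Real.exp (-r * (Real.log (μbar / (μbar - μ)) / (-k))) * V -
        ((μbar / k) * Real.log ((μbar - μ) / μbar) - μ / k) with hg
  have hrk : 0 < r + k := by linarith
  have hV0 : 0 ≤ V := by
    rw [hV, sub_nonneg]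
    apply div_le_div_of_nonneg_left hμbar.le hr
    linarith
  -- continuity on Iio 0
  have hcont : ContinuousOn g (Set.Iio 0) := by
    intro μ hμ
    have h1 : μbar - μ ≠ 0 := by
      have : μ < 0 := hμ
      have : 0 < μbar - μ := by linarith
      exact this.ne'
    exact (gdet_contAt k μbar r hk.ne' h1 hμbar.ne').continuousWithinAt
  -- strict monotonicity
  have hmono : StrictMonoOn g (Set.Iio 0) := by
    intro a ha b hb hab
    have hA : 0 < μbar - a := by have : a < 0 := ha; linarith
    have hB : 0 < μbar - b := by have : b < 0 := hb; linarith
    have hBA : μbar - b < μbar - a := by linarith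
    have hT1 : Real.exp (-r * (Real.log (μbar / (μbar - a)) / (-k))) * V ≤
        Real.exp (-r * (Real.log (μbar / (μbar - b)) / (-k))) * V := by
      apply mul_le_mul_of_nonneg_right _ hV0
      rw [Real.exp_le_exp, gdet_rw, gdet_rw]
      apply mul_le_mul_of_nonneg_left _ (div_nonneg hr.le hk.le)
      apply Real.log_le_log (div_pos hμbar hA)
      exact div_le_div_of_nonneg_left hμbar.le hB hBA.le
    have hlog : Real.log ((μbar - b) / μbar) < Real.log ((μbar - a) / μbar) :=
      Real.log_lt_log (div_pos hB hμbar) (by gcongr)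
    have hX : (μbar / k) * Real.log ((μbar - b) / μbar) - b / k <
        (μbar / k) * Real.log ((μbar - a) / μbar) - a / k := by
      have h1 : (μbar / k) * Real.log ((μbar - b) / μbar) <
          (μbar / k) * Real.log ((μbar - a) / μbar) :=
        mul_lt_mul_of_pos_left hlog (div_pos hμbar hk)
      have h2 : a / k < b / k := div_lt_div_of_pos_right hab hk
      linarith
    simp only [hg]
    linarith
  -- limit at -infinity
  have hbot : Tendsto g atBot atBot := by
    have htop : Tendsto (fun μ : ℝ => μbar - μ) atBot atTop := by
      apply tendsto_atTop_add_const_left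
      exact tendsto_neg_atBot_atTop
    have hratio : Tendsto (fun μ : ℝ => μbar / (μbar - μ)) atBot (nhds 0) :=
      Tendsto.div_atTop tendsto_const_nhds htop
    have hratio' : Tendsto (fun μ : ℝ => μbar / (μbar - μ)) atBot
        (nhdsWithin 0 (Set.Ioi 0)) := by
      apply tendsto_nhdsWithin_of_tendsto_nhds_of_eventually_within _ hratio
      filter_upwards [eventually_lt_atBot (0 : ℝ)] with μ hμ
      exact div_pos hμbar (by linarith)
    have hlogbot : Tendsto (fun μ : ℝ => Real.log (μbar / (μbar - μ))) atBot atBot :=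
      Real.tendsto_log_nhdsGT_zero.comp hratio'
    have hexp : Tendsto (fun μ : ℝ =>
        Real.exp (-r * (Real.log (μbar / (μbar - μ)) / (-k))) * V) atBot (nhds (0 * V)) := by
      apply Tendsto.mul_const
      apply Real.tendsto_exp_atBot.comp
      have : (fun μ : ℝ => -r * (Real.log (μbar / (μbar - μ)) / (-k))) =
          fun μ : ℝ => r / k * Real.log (μbar / (μbar - μ)) := by
        funext μ; exact gdet_rw k r _
      rw [this]
      exact Tendsto.const_mul_atBot (div_pos hr hk) hlogbot
    have hxb : Tendsto (fun μ : ℝ =>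
        -((μbar / k) * Real.log ((μbar - μ) / μbar) - μ / k)) atBot atBot := by
      have hlt : Tendsto (fun μ : ℝ => (μbar - μ) / μbar) atBot atTop :=
        htop.atTop_div_const hμbar
      have hlt2 : Tendsto (fun μ : ℝ => Real.log ((μbar - μ) / μbar)) atBot atTop :=
        Real.tendsto_log_atTop.comp hlt
      have h1 : Tendsto (fun μ : ℝ => -((μbar / k) * Real.log ((μbar - μ) / μbar)))
          atBot atBot := by
        apply tendsto_neg_atTop_atBot.comp
        exact Tendsto.const_mul_atTop (div_pos hμbar hk) hlt2
      have h2 : Tendsto (fun μ : ℝ => μ / k) atBot atBot :=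
        tendsto_id.atBot_div_const hk
      have := Tendsto.atBot_add_atBot h1 h2
      apply this.congr
      intro μ; ring
    have := hexp.add_atBot hxb
    apply this.congr
    intro μ; simp only [hg]; ring
  -- limit at 0 from the left
  have h0 : Tendsto g (nhdsWithin 0 (Set.Iio 0)) (nhds V) := by
    have hca : ContinuousAt g 0 := by
      apply gdet_contAt k μbar r hk.ne' _ hμbar.ne'
      simpa using hμbar.ne'
    have := hca.continuousWithinAt.tendsto (s := Set.Iio 0)
    have hg0 : g 0 = V := by
      simp [hg, div_self hμbar.ne']
    rwa [hg0] at this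
  refine ⟨hV0, hcont, hmono, hbot, h0, ?_⟩
  -- existence and uniqueness
  intro hVpos
  obtain ⟨b, hgb, hb0⟩ : ∃ b, 0 < g b ∧ b ∈ Set.Iio 0 := by
    have h1 : ∀ᶠ x in nhdsWithin 0 (Set.Iio 0), 0 < g x :=
      h0.eventually (eventually_gt_nhds hVpos)
    have h2 : ∀ᶠ x in nhdsWithin 0 (Set.Iio (0:ℝ)), x ∈ Set.Iio (0:ℝ) :=
      eventually_mem_nhdsWithin
    exact (h1.and h2).exists
  obtain ⟨a, hga, hab⟩ : ∃ a, g a < 0 ∧ a < b := by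
    have h1 : ∀ᶠ x in atBot, g x < 0 := hbot.eventually (eventually_lt_atBot 0)
    have h2 : ∀ᶠ x : ℝ in atBot, x < b := eventually_lt_atBot b
    exact (h1.and h2).exists
  have hIcc : Set.Icc a b ⊆ Set.Iio 0 := fun x hx => lt_of_le_of_lt hx.2 hb0
  obtain ⟨μstar, hμmem, hμval⟩ :
      ∃ μstar ∈ Set.Icc a b, g μstar = 0 := by
    have := intermediate_value_Icc hab.le (hcont.mono hIcc)
    have h0mem : (0:ℝ) ∈ Set.Icc (g a) (g b) := ⟨hga.le, hgb.le⟩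
    obtain ⟨x, hx, hgx⟩ := this h0mem
    exact ⟨x, hx, hgx⟩
  have hμlt : μstar < 0 := hIcc hμmem
  refine ⟨μstar, ⟨hμlt, hμval⟩, ?_⟩
  rintro y ⟨hy0, hyval⟩
  exact hmono.injOn hy0 hμlt (hyval.trans hμval.symm)
end

section
/- Let ĥ ∈ ℝ, γ > 0, and suppose C ≥ 1/(μ-ĥ) - 2f^μ(μ)/σ̃(μ)² for all μ ∈ (ĥ, ĥ+γ), where σ̃ > 0 and f^μ are continuous on (ĥ, ĥ+γ). Define h(μ) = ∫_μ^{ĥ+γ} e^{C(ξ-ĥ)}(ξ-ĥ)^{-1} dξ. Then h is twice differentiable on (ĥ, ĥ+γ) and satisfies the supersolution inequality f^μ(μ) h'(μ) + (σ̃(μ)²/2) h''(μ) ≤ 0 on (ĥ, ĥ+γ). -/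
/-- The barrier function h(μ) = ∫_μ^{ĥ+γ} e^{C(ξ-ĥ)}(ξ-ĥ)⁻¹ dξ is twice
differentiable and satisfies f^μ h' + (σ̃²/2) h'' ≤ 0 on (ĥ, ĥ+γ), provided
C ≥ 1/(μ-ĥ) - 2f^μ(μ)/σ̃(μ)² there. -/
theorem barrier_supersolution (γ hhat C : ℝ) (hγ : 0 < γ) (σt fμ : ℝ → ℝ)
    (hσcont : ContinuousOn σt (Set.Ioo hhat (hhat + γ)))
    (hfcont : ContinuousOn fμ (Set.Ioo hhat (hhat + γ)))
    (hσpos : ∀ μ ∈ Set.Ioo hhat (hhat + γ), 0 < σt μ)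
    (hC : ∀ μ ∈ Set.Ioo hhat (hhat + γ),
      1 / (μ - hhat) - 2 * fμ μ / (σt μ) ^ 2 ≤ C) :
    ∀ μ ∈ Set.Ioo hhat (hhat + γ),
      DifferentiableAt ℝ
        (fun m => ∫ ξ in m..(hhat + γ), Real.exp (C * (ξ - hhat)) * (ξ - hhat)⁻¹) μ ∧
      DifferentiableAt ℝ
        (deriv (fun m => ∫ ξ in m..(hhat + γ),
          Real.exp (C * (ξ - hhat)) * (ξ - hhat)⁻¹)) μ ∧
      fμ μ * deriv (fun m => ∫ ξ in m..(hhat + γ),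
          Real.exp (C * (ξ - hhat)) * (ξ - hhat)⁻¹) μ +
        (σt μ) ^ 2 / 2 * deriv (deriv (fun m => ∫ ξ in m..(hhat + γ),
          Real.exp (C * (ξ - hhat)) * (ξ - hhat)⁻¹)) μ ≤ 0 := by
  set b := hhat + γ with hb
  set g : ℝ → ℝ := fun ξ => Real.exp (C * (ξ - hhat)) * (ξ - hhat)⁻¹ with hgdef
  have hgmeas : Measurable g := by
    apply Measurable.mul
    · exact (Real.measurable_exp.comp (measurable_const.mul (measurable_id.sub measurable_const)))
    · exact (measurable_id.sub measurable_const).inv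
  have hgc : ∀ x ∈ Set.Ioi hhat, ContinuousAt g x := by
    intro x hx
    have hx0 : x - hhat ≠ 0 := sub_ne_zero.2 (ne_of_gt hx)
    exact ((Real.continuous_exp.comp (continuous_const.mul (continuous_id.sub continuous_const))).continuousAt).mul
      (((continuous_id.sub continuous_const).continuousAt).inv₀ hx0)
  -- FTC at each point of the interval
  have key : ∀ x ∈ Set.Ioo hhat b, HasDerivAt (fun m => ∫ ξ in m..b, g ξ) (-(g x)) x := by
    intro x hx
    have hint : IntervalIntegrable g MeasureTheory.volume x b := by
      apply ContinuousOn.intervalIntegrable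
      intro y hy
      have hy' : hhat < y := by
        rcases Set.mem_uIcc.1 hy with h | h
        · linarith [hx.1, h.1]
        · linarith [hx.2, h.1, hγ]
      exact (hgc y hy').continuousWithinAt
    exact intervalIntegral.integral_hasDerivAt_left hint
      hgmeas.aestronglyMeasurable.stronglyMeasurableAtFilter (hgc x hx.1)
  intro μ hμ
  have hd : 0 < μ - hhat := sub_pos.2 hμ.1
  have hopen : Set.Ioo hhat b ∈ nhds μ := (isOpen_Ioo).mem_nhds hμ
  have hder : deriv (fun m => ∫ ξ in m..b, g ξ) =ᶠ[nhds μ] fun x => -(g x) := by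
    filter_upwards [hopen] with x hx
    exact (key x hx).deriv
  -- derivative of g
  have hgd : ∀ x ∈ Set.Ioo hhat b, HasDerivAt g
      (Real.exp (C * (x - hhat)) * (C * (x - hhat)⁻¹ - ((x - hhat)⁻¹) ^ 2)) x := by
    intro x hx
    have hx0 : x - hhat ≠ 0 := sub_ne_zero.2 (ne_of_gt hx.1)
    have h1 : HasDerivAt (fun y : ℝ => Real.exp (C * (y - hhat)))
        (Real.exp (C * (x - hhat)) * C) x := by
      have : HasDerivAt (fun y : ℝ => C * (y - hhat)) C x :=
        (((hasDerivAt_id x).sub_const hhat).const_mul C).congr_deriv (mul_one C)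
      exact this.exp
    have h2 : HasDerivAt (fun y : ℝ => (y - hhat)⁻¹) (-1 / (x - hhat) ^ 2) x := by
      have : HasDerivAt (fun y : ℝ => y - hhat) 1 x := (hasDerivAt_id x).sub_const hhat
      exact this.inv hx0
    have : HasDerivAt (fun y : ℝ => Real.exp (C * (y - hhat)) * (y - hhat)⁻¹) _ x := h1.mul h2
    convert this using 1
    rw [inv_pow]
    ring
  have hder2 : HasDerivAt (fun x => -(g x))
      (-(Real.exp (C * (μ - hhat)) * (C * (μ - hhat)⁻¹ - ((μ - hhat)⁻¹) ^ 2))) μ :=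
    (hgd μ hμ).neg
  have hD1 : DifferentiableAt ℝ (fun m => ∫ ξ in m..b, g ξ) μ := (key μ hμ).differentiableAt
  have hD2 : DifferentiableAt ℝ (deriv (fun m => ∫ ξ in m..b, g ξ)) μ :=
    (Filter.EventuallyEq.differentiableAt_iff hder).2 hder2.differentiableAt
  refine ⟨hD1, hD2, ?_⟩
  have e1 : deriv (fun m => ∫ ξ in m..b, g ξ) μ = -(g μ) := (key μ hμ).deriv
  have e2 : deriv (deriv (fun m => ∫ ξ in m..b, g ξ)) μ
      = -(Real.exp (C * (μ - hhat)) * (C * (μ - hhat)⁻¹ - ((μ - hhat)⁻¹) ^ 2)) := by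
    rw [hder.deriv_eq]
    exact hder2.deriv
  rw [e1, e2]
  have hσ := hσpos μ hμ
  have hCμ := hC μ hμ
  have he : 0 < Real.exp (C * (μ - hhat)) := Real.exp_pos _
  have hσ2 : 0 < (σt μ) ^ 2 := by positivity
  set d := μ - hhat
  set E := Real.exp (C * d)
  have hg0 : g μ = E * d⁻¹ := rfl
  rw [hg0]
  have h1 : (σt μ) ^ 2 * (1 / d - 2 * fμ μ / (σt μ) ^ 2) ≤ (σt μ) ^ 2 * C :=
    mul_le_mul_of_nonneg_left hCμ hσ2.le
  have h2 : (σt μ) ^ 2 / d - 2 * fμ μ ≤ (σt μ) ^ 2 * C := by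
    have : (σt μ) ^ 2 * (1 / d - 2 * fμ μ / (σt μ) ^ 2) = (σt μ) ^ 2 / d - 2 * fμ μ := by
      field_simp
    linarith [h1, this ▸ h1]
  have hdinv : 0 < d⁻¹ := inv_pos.2 hd
  have hEd : 0 < E * d⁻¹ := mul_pos he hdinv
  -- goal: fμ μ * -(E * d⁻¹) + σ²/2 * -(E * (C * d⁻¹ - (d⁻¹)^2)) ≤ 0
  have key2 : 0 ≤ E * d⁻¹ * (fμ μ + (σt μ) ^ 2 / 2 * (C - d⁻¹)) := by
    apply mul_nonneg hEd.le
    have hdd : d * d⁻¹ = 1 := mul_inv_cancel₀ (ne_of_gt hd)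
    have : (σt μ) ^ 2 / d = (σt μ) ^ 2 * d⁻¹ := by field_simp
    nlinarith [h2, hσ2, hd]
  nlinarith [key2, he, hdinv, hσ2, sq_nonneg d⁻¹]
end

section
/- Let L¹, L², C: [0,∞) → ℝ with L¹, L² nondecreasing and C continuous, x > 0, and define θ(L) = inf{t : x + C(t) - L(t) < 0}. Then it can happen that θ((L¹+L²)/2) < max{θ(L¹), θ(L²)}; i.e., there exist explicit x, C, L¹, L² witnessing that the map L ↦ θ(L) is not quasi-concave and the set of dividend processes constant after their own ruin time is not convex. -/
/-- The ruin time L ↦ θ(L) is not quasi-concave: there exist x > 0, a continuous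
cash flow C, and nondecreasing strategies L¹, L² whose convex combination ruins
strictly before the later of their two ruin times. -/
theorem ruin_time_not_quasiconcave :
    ∃ (x : ℝ) (C L1 L2 : ℝ → ℝ), 0 < x ∧ Continuous C ∧ C 0 = 0 ∧
      Monotone L1 ∧ Monotone L2 ∧
      {t : ℝ | 0 ≤ t ∧ x + C t - L1 t < 0}.Nonempty ∧
      {t : ℝ | 0 ≤ t ∧ x + C t - L2 t < 0}.Nonempty ∧
      {t : ℝ | 0 ≤ t ∧ x + C t - (L1 t + L2 t) / 2 < 0}.Nonempty ∧
      sInf {t : ℝ | 0 ≤ t ∧ x + C t - (L1 t + L2 t) / 2 < 0} <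
        max (sInf {t : ℝ | 0 ≤ t ∧ x + C t - L1 t < 0})
          (sInf {t : ℝ | 0 ≤ t ∧ x + C t - L2 t < 0}) := by
  refine ⟨1, 0, fun t => if 1 ≤ t then 3 else 0, fun t => if 2 ≤ t then 3 else 0,
    one_pos, continuous_const, rfl, ?_, ?_, ?_, ?_, ?_, ?_⟩
  · intro a b hab
    dsimp only
    split_ifs with h1 h2 h2 <;> norm_num
    exact h2 (h1.trans hab)
  · intro a b hab
    dsimp only
    split_ifs with h1 h2 h2 <;> norm_num
    exact h2 (h1.trans hab)
  · exact ⟨1, by norm_num⟩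
  · exact ⟨2, by norm_num⟩
  · exact ⟨1, by norm_num⟩
  · have e1 : {t : ℝ | 0 ≤ t ∧ (1:ℝ) + (0:ℝ→ℝ) t -
        (if 1 ≤ t then (3:ℝ) else 0) < 0} = Set.Ici 1 := by
      ext t
      simp only [Set.mem_setOf_eq, Set.mem_Ici, Pi.zero_apply]
      constructor
      · rintro ⟨-, h⟩
        by_contra hc
        rw [if_neg hc] at h
        linarith
      · intro h
        refine ⟨by linarith, by rw [if_pos h]; norm_num⟩
    have e2 : {t : ℝ | 0 ≤ t ∧ (1:ℝ) + (0:ℝ→ℝ) t -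
        (if 2 ≤ t then (3:ℝ) else 0) < 0} = Set.Ici 2 := by
      ext t
      simp only [Set.mem_setOf_eq, Set.mem_Ici, Pi.zero_apply]
      constructor
      · rintro ⟨-, h⟩
        by_contra hc
        rw [if_neg hc] at h
        linarith
      · intro h
        refine ⟨by linarith, by rw [if_pos h]; norm_num⟩
    have e3 : {t : ℝ | 0 ≤ t ∧ (1:ℝ) + (0:ℝ→ℝ) t -
        ((if 1 ≤ t then (3:ℝ) else 0) + (if 2 ≤ t then (3:ℝ) else 0)) / 2 < 0}
        = Set.Ici 1 := by
      ext t
      simp only [Set.mem_setOf_eq, Set.mem_Ici, Pi.zero_apply]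
      constructor
      · rintro ⟨-, h⟩
        by_contra hc
        rw [if_neg hc, if_neg (fun h2 => hc (by linarith))] at h
        linarith
      · intro h
        refine ⟨by linarith, ?_⟩
        rw [if_pos h]
        split_ifs <;> norm_num
    rw [e1, e2, e3, csInf_Ici, csInf_Ici]
    norm_num
end
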